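/- Let F be a set of FDs over relation schema R such that every FD in F has a nonempty left-hand side (no consensus FDs) and F contains at least one nontrivial FD. Let X → Z be a nontrivial FD in F with X minimal (with respect to set containment) among left-hand sides of FDs in F, and let Y = X⁺_F ∖ X. Then X is nonempty, Y is nonempty, and exactly one of the following holds: (1) F implies Y → A for some attribute A ∈ X, or (2) Y⁺_F = Y. -/
import Mathlib


/-- A set `T` of attributes is closed under a set `F` of FDs. -/
def FdClosed {Att : Type} (F : Finset (Finset Att × Finset Att)) (T : Set Att) : Prop :=
  ∀ fd ∈ F, ↑fd.1 ⊆ T → ↑fd.2 ⊆ T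

/-- The closure `S⁺_F` of an attribute set `S` under a set `F` of FDs: the least superset of `S`
closed under `F`.  (`A ∈ FdCl F S` iff `F` implies `S → A`.) -/
def FdCl {Att : Type} (F : Finset (Finset Att × Finset Att)) (S : Set Att) : Set Att :=
  ⋂₀ {T : Set Att | S ⊆ T ∧ FdClosed F T}

lemma subset_fdCl {Att : Type} (F : Finset (Finset Att × Finset Att)) (S : Set Att) :
    S ⊆ FdCl F S := fun a ha => Set.mem_sInter.2 fun _ hT => hT.1 ha

lemma fdCl_closed {Att : Type} (F : Finset (Finset Att × Finset Att)) (S : Set Att) :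
    FdClosed F (FdCl F S) := by
  intro fd hfd h1 a ha
  refine Set.mem_sInter.2 fun T hT => ?_
  exact hT.2 fd hfd (fun b hb => Set.mem_sInter.1 (h1 hb) T hT) ha

lemma fdCl_min {Att : Type} (F : Finset (Finset Att × Finset Att)) {S T : Set Att}
    (hST : S ⊆ T) (hT : FdClosed F T) : FdCl F S ⊆ T :=
  Set.sInter_subset_of_mem ⟨hST, hT⟩

theorem stmt10 {Att : Type}
    (F : Finset (Finset Att × Finset Att))
    (hlhs : ∀ fd ∈ F, fd.1.Nonempty)
    (X Z : Finset Att) (hXZ : (X, Z) ∈ F) (hnt : ¬ ↑Z ⊆ (↑X : Set Att))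
    (hmin : ∀ fd ∈ F, ¬ fd.1 ⊂ X) :
    let Y : Set Att := FdCl F ↑X \ ↑X
    X.Nonempty ∧ Y.Nonempty
      ∧ ((∃ A ∈ X, A ∈ FdCl F Y) ∨ FdCl F Y = Y)
      ∧ ¬ ((∃ A ∈ X, A ∈ FdCl F Y) ∧ FdCl F Y = Y) := by
  intro Y
  have hXne : X.Nonempty := hlhs (X, Z) hXZ
  have hZcl : (↑Z : Set Att) ⊆ FdCl F ↑X :=
    fdCl_closed F ↑X (X, Z) hXZ (subset_fdCl F ↑X)
  obtain ⟨a, haZ, haX⟩ := Set.not_subset.1 hnt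
  have hYne : Y.Nonempty := ⟨a, hZcl haZ, haX⟩
  have hYsub : Y ⊆ FdCl F ↑X := Set.diff_subset
  have hYcl : FdCl F Y ⊆ FdCl F ↑X :=
    fdCl_min F hYsub (fdCl_closed F ↑X)
  refine ⟨hXne, hYne, ?_, ?_⟩
  · by_cases h : ∃ A ∈ X, A ∈ FdCl F Y
    · exact Or.inl h
    · right
      apply Set.Subset.antisymm _ (subset_fdCl F Y)
      intro b hb
      refine ⟨hYcl hb, fun hbX => h ⟨b, hbX, hb⟩⟩
  · rintro ⟨⟨A, hAX, hAcl⟩, heq⟩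
    rw [heq] at hAcl
    exact hAcl.2 hAX
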